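/- Case 0 of the Interiority Lemma: if A, B, C, O are compact convex planar sets, pairwise intersecting, with (A,B,O), (B,C,O), (C,A,O) each having empty triple intersection and orientation +1, then A ∩ B ∩ C = ∅. (Equivalently: if w ∈ A ∩ B ∩ C and a ∈ A∩O, b ∈ B∩O, c ∈ C∩O with sign det(b−a, w−a) = sign det(c−b, w−b) = sign det(a−c, w−c) = +1, then w lies in the convex hull of {a,b,c} ⊆ O, contradicting A∩B∩O = ∅.) -/

import Mathlib

noncomputable def det2 (p q r : ℝ × ℝ) : ℝ :=
  (q.1 - p.1) * (r.2 - p.2) - (q.2 - p.2) * (r.1 - p.1)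

noncomputable def ptOrient (p q r : ℝ × ℝ) : ℝ := Real.sign (det2 p q r)

lemma pos_of_sign_eq_one {r : ℝ} (h : Real.sign r = 1) : 0 < r := by
  rcases lt_trichotomy r 0 with hr | hr | hr
  · rw [Real.sign_of_neg hr] at h; norm_num at h
  · rw [hr, Real.sign_zero] at h; norm_num at h
  · exact hr

lemma mem_hull_of_pos (a b c w : ℝ × ℝ)
    (h1 : 0 < det2 b a w) (h2 : 0 < det2 c b w) (h3 : 0 < det2 a c w)
    {O : Set (ℝ × ℝ)} (hO : Convex ℝ O) (ha : a ∈ O) (hb : b ∈ O) (hc : c ∈ O) :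
    w ∈ O := by
  set u := det2 b a w with hu
  set v := det2 c b w with hv
  set t := det2 a c w with ht
  have hs : 0 < u + v + t := by positivity
  have hne : u + v + t ≠ 0 := ne_of_gt hs
  have e1 : v * a.1 + t * b.1 + u * c.1 = (u + v + t) * w.1 := by
    simp only [hu, hv, ht, det2]; ring
  have e2 : v * a.2 + t * b.2 + u * c.2 = (u + v + t) * w.2 := by
    simp only [hu, hv, ht, det2]; ring
  have hw : w = (v / (u + v + t)) • a + (t / (u + v + t)) • b + (u / (u + v + t)) • c := by
    apply Prod.ext
    · show w.1 = _
      rw [Prod.fst_add, Prod.fst_add, Prod.smul_fst, Prod.smul_fst, Prod.smul_fst,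
        smul_eq_mul, smul_eq_mul, smul_eq_mul, div_mul_eq_mul_div, div_mul_eq_mul_div,
        div_mul_eq_mul_div, ← add_div, ← add_div, e1,
        mul_comm, mul_div_assoc, div_self hne, mul_one]
    · show w.2 = _
      rw [Prod.snd_add, Prod.snd_add, Prod.smul_snd, Prod.smul_snd, Prod.smul_snd,
        smul_eq_mul, smul_eq_mul, smul_eq_mul, div_mul_eq_mul_div, div_mul_eq_mul_div,
        div_mul_eq_mul_div, ← add_div, ← add_div, e2,
        mul_comm, mul_div_assoc, div_self hne, mul_one]
  rw [hw]
  set s := u + v + t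
  have key : (Finset.univ : Finset (Fin 3)).sum
      (fun i => (![v/s, t/s, u/s] i) • (![a, b, c] i)) ∈ O := by
    apply hO.sum_mem
    · intro i _
      fin_cases i <;> simp <;> positivity
    · simp [Fin.sum_univ_three]
      field_simp
      ring
    · intro i _
      fin_cases i <;> simpa
  simpa [Fin.sum_univ_three, add_assoc] using key

theorem stmt_4 (A B C O : Set (ℝ × ℝ))
    (hAc : IsCompact A) (hBc : IsCompact B) (hCc : IsCompact C) (hOc : IsCompact O)
    (hA : Convex ℝ A) (hB : Convex ℝ B) (hC : Convex ℝ C) (hO : Convex ℝ O)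
    (hAB : (A ∩ B).Nonempty) (hAC : (A ∩ C).Nonempty) (hAO : (A ∩ O).Nonempty)
    (hBC : (B ∩ C).Nonempty) (hBO : (B ∩ O).Nonempty) (hCO : (C ∩ O).Nonempty)
    (hABO : A ∩ B ∩ O = ∅) (hBCO : B ∩ C ∩ O = ∅) (hCAO : C ∩ A ∩ O = ∅)
    (oABO : ∀ x ∈ B ∩ O, ∀ y ∈ A ∩ O, ∀ z ∈ A ∩ B, ptOrient x y z = 1)
    (oBCO : ∀ x ∈ C ∩ O, ∀ y ∈ B ∩ O, ∀ z ∈ B ∩ C, ptOrient x y z = 1)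
    (oCAO : ∀ x ∈ A ∩ O, ∀ y ∈ C ∩ O, ∀ z ∈ C ∩ A, ptOrient x y z = 1) :
    A ∩ B ∩ C = ∅ := by
  by_contra h
  obtain ⟨w, hwA, hwB, hwC⟩ : ∃ w, w ∈ A ∧ w ∈ B ∧ w ∈ C := by
    rcases Set.nonempty_iff_ne_empty.2 h with ⟨w, hw⟩
    exact ⟨w, hw.1.1, hw.1.2, hw.2⟩
  obtain ⟨a, haA, haO⟩ := hAO
  obtain ⟨b, hbB, hbO⟩ := hBO
  obtain ⟨c, hcC, hcO⟩ := hCO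
  have h1 : 0 < det2 b a w := by
    have := oABO b ⟨hbB, hbO⟩ a ⟨haA, haO⟩ w ⟨hwA, hwB⟩
    exact pos_of_sign_eq_one this
  have h2 : 0 < det2 c b w := by
    have := oBCO c ⟨hcC, hcO⟩ b ⟨hbB, hbO⟩ w ⟨hwB, hwC⟩
    exact pos_of_sign_eq_one this
  have h3 : 0 < det2 a c w := by
    have := oCAO a ⟨haA, haO⟩ c ⟨hcC, hcO⟩ w ⟨hwC, hwA⟩
    exact pos_of_sign_eq_one this
  have hwO : w ∈ O := mem_hull_of_pos a b c w h1 h2 h3 hO haO hbO hcO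
  have : w ∈ A ∩ B ∩ O := ⟨⟨hwA, hwB⟩, hwO⟩
  rw [hABO] at this
  exact this
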